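/- Let Σ be a finite set, μ a probability distribution on Σ with full support, n, d ∈ ℕ with d ≥ 1, and ξ > 0. If g : Σ^n → ℂ is 1-bounded (|g(x)| ≤ 1 for all x) and satisfies W_{≤d}[g] ≥ ξ over μ^⊗n, then choosing a random restriction (I,y) with alive-probability 1/(2d), we have Pr_{I,y}[ |E_{z∼μ^I}[g_{\bar I→y}(z)]| ≥ √(ξ/(2e)) ] ≥ ξ/(2e). -/

import Mathlib

open scoped Classical BigOperators

noncomputable section

/-- Product weight `μ^{⊗n}(x) = ∏ᵢ μ(xᵢ)` on `Ω^n`. -/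
def wtp {Ω : Type*} [Fintype Ω] (μ : Ω → ℝ) {n : ℕ} (x : Fin n → Ω) : ℝ :=
  ∏ i, μ (x i)

/-- Inner product `⟨f,g⟩ = E_{x∼μ^{⊗n}}[f(x)·conj(g(x))]` on functions `Ω^n → ℂ`. -/
def innerμ {Ω : Type*} [Fintype Ω] (μ : Ω → ℝ) {n : ℕ} (f g : (Fin n → Ω) → ℂ) : ℂ :=
  ∑ x, (wtp μ x : ℂ) * f x * starRingEnd ℂ (g x)

/-- `g` is an `S`-junta: it depends only on the coordinates in `S`. -/
def IsJunta {Ω : Type*} {n : ℕ} (g : (Fin n → Ω) → ℂ) (S : Finset (Fin n)) : Prop :=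
  ∀ x y : Fin n → Ω, (∀ i ∈ S, x i = y i) → g x = g y

/-- Membership in `V_{=S} = V_{⊆S} ∩ ⋂_{T ⊊ S} V_{⊆T}^⊥`. -/
def InVeq {Ω : Type*} [Fintype Ω] (μ : Ω → ℝ) {n : ℕ}
    (g : (Fin n → Ω) → ℂ) (S : Finset (Fin n)) : Prop :=
  IsJunta g S ∧
    ∀ T : Finset (Fin n), T ⊂ S → ∀ h : (Fin n → Ω) → ℂ, IsJunta h T → innerμ μ g h = 0

/-- The squared `L²(μ^{⊗n})`-norm of `g`. -/
def norm2sq {Ω : Type*} [Fintype Ω] (μ : Ω → ℝ) {n : ℕ} (g : (Fin n → Ω) → ℂ) : ℝ :=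
  ∑ x, wtp μ x * Complex.normSq (g x)

/-- The point of `Ω^n` agreeing with `w` on `I` and with `y` outside `I`. -/
def mergeF {Ω : Type*} {n : ℕ} (I : Finset (Fin n)) (w : {i // i ∈ I} → Ω)
    (y : Fin n → Ω) : Fin n → Ω :=
  fun i => if h : i ∈ I then w ⟨i, h⟩ else y i

set_option linter.unusedSectionVars false
namespace Aux
variable {Ω : Type*} [Fintype Ω] {n : ℕ} (μ : Ω → ℝ)

def avg (I : Finset (Fin n)) (f : (Fin n → Ω) → ℂ) : (Fin n → Ω) → ℂ :=
  fun y => ∑ w : {i // i ∈ I} → Ω, ((∏ i, μ (w i) : ℝ) : ℂ) * f (mergeF I w y)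

lemma mergeF_mem {I : Finset (Fin n)} {w : {i // i ∈ I} → Ω} {y : Fin n → Ω} {i : Fin n}
    (h : i ∈ I) : mergeF I w y i = w ⟨i, h⟩ := by simp [mergeF, h]

lemma mergeF_not_mem {I : Finset (Fin n)} {w : {i // i ∈ I} → Ω} {y : Fin n → Ω} {i : Fin n}
    (h : i ∉ I) : mergeF I w y i = y i := by simp [mergeF, h]

lemma mergeF_mergeF {I : Finset (Fin n)} (w w' : {i // i ∈ I} → Ω) (y : Fin n → Ω) :
    mergeF I w (mergeF I w' y) = mergeF I w y := by
  funext i; by_cases h : i ∈ I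
  · rw [mergeF_mem h, mergeF_mem h]
  · rw [mergeF_not_mem h, mergeF_not_mem h, mergeF_not_mem h]

lemma mergeF_self {I : Finset (Fin n)} (y : Fin n → Ω) :
    mergeF I (fun i => y i.val) y = y := by
  funext i; by_cases h : i ∈ I
  · rw [mergeF_mem h]
  · rw [mergeF_not_mem h]

lemma prod_I_merge (I : Finset (Fin n)) (w : {i // i ∈ I} → Ω) (y : Fin n → Ω) :
    ∏ i ∈ I, μ (mergeF I w y i) = ∏ i : {i // i ∈ I}, μ (w i) := by
  rw [Finset.univ_eq_attach, ← Finset.prod_attach I (fun i => μ (mergeF I w y i))]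
  exact Finset.prod_congr rfl fun i _ => by rw [mergeF_mem i.2]

lemma prod_I_pt (I : Finset (Fin n)) (y : Fin n → Ω) :
    ∏ i ∈ I, μ (y i) = ∏ i : {i // i ∈ I}, μ (y i.val) := by
  rw [Finset.univ_eq_attach, ← Finset.prod_attach I (fun i => μ (y i))]

lemma prod_compl_merge (I : Finset (Fin n)) (w : {i // i ∈ I} → Ω) (y : Fin n → Ω) :
    ∏ i ∈ Iᶜ, μ (mergeF I w y i) = ∏ i ∈ Iᶜ, μ (y i) :=
  Finset.prod_congr rfl fun i hi => by rw [mergeF_not_mem (Finset.mem_compl.mp hi)]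

lemma wt_merge (I : Finset (Fin n)) (w : {i // i ∈ I} → Ω) (y : Fin n → Ω) :
    wtp μ (mergeF I w y) * ∏ i : {i // i ∈ I}, μ (y i.val)
      = wtp μ y * ∏ i : {i // i ∈ I}, μ (w i) := by
  unfold wtp
  rw [← Finset.prod_mul_prod_compl I (fun i => μ (mergeF I w y i)),
      ← Finset.prod_mul_prod_compl I (fun i => μ (y i)),
      prod_I_merge, prod_compl_merge, ← prod_I_pt]
  ring

/-- the restriction involution. -/
def rEquiv (I : Finset (Fin n)) :
    ((Fin n → Ω) × ({i // i ∈ I} → Ω)) ≃ ((Fin n → Ω) × ({i // i ∈ I} → Ω)) where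
  toFun p := (mergeF I p.2 p.1, fun i => p.1 i.val)
  invFun p := (mergeF I p.2 p.1, fun i => p.1 i.val)
  left_inv p := by
    ext1
    · simp only [mergeF_mergeF, mergeF_self]
    · funext i; simp only [mergeF_mem i.2]
  right_inv p := by
    ext1
    · simp only [mergeF_mergeF, mergeF_self]
    · funext i; simp only [mergeF_mem i.2]

lemma avg_selfadj (I : Finset (Fin n)) (f h : (Fin n → Ω) → ℂ) :
    innerμ μ (avg μ I f) h = innerμ μ f (avg μ I h) := by
  unfold innerμ avg
  have L : ∀ y : Fin n → Ω,
      (wtp μ y : ℂ) * (∑ w : {i // i ∈ I} → Ω, ((∏ i, μ (w i) : ℝ) : ℂ) * f (mergeF I w y))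
        * starRingEnd ℂ (h y)
      = ∑ w : {i // i ∈ I} → Ω,
          ((wtp μ y : ℝ) : ℂ) * ((∏ i, μ (w i) : ℝ) : ℂ) * f (mergeF I w y)
            * starRingEnd ℂ (h y) := by
    intro y; rw [Finset.mul_sum, Finset.sum_mul]; congr 1; funext w; ring
  have R : ∀ y : Fin n → Ω,
      (wtp μ y : ℂ) * f y * starRingEnd ℂ
          (∑ w : {i // i ∈ I} → Ω, ((∏ i, μ (w i) : ℝ) : ℂ) * h (mergeF I w y))
      = ∑ w : {i // i ∈ I} → Ω,
          ((wtp μ y : ℝ) : ℂ) * ((∏ i, μ (w i) : ℝ) : ℂ) * f y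
            * starRingEnd ℂ (h (mergeF I w y)) := by
    intro y
    rw [map_sum, Finset.mul_sum]
    congr 1; funext w
    rw [map_mul, Complex.conj_ofReal]; ring
  simp only [L, R]
  rw [← Finset.sum_product', ← Finset.sum_product']
  refine Fintype.sum_equiv (rEquiv I) _ _ ?_
  rintro ⟨y, w⟩
  show (wtp μ y : ℂ) * _ * f (mergeF I w y) * starRingEnd ℂ (h y)
    = (wtp μ (mergeF I w y) : ℂ) * ((∏ i : {i // i ∈ I}, μ (y i.val) : ℝ) : ℂ)
        * f (mergeF I w y) * starRingEnd ℂ (h (mergeF I (fun i => y i.val) (mergeF I w y)))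
  rw [mergeF_mergeF, mergeF_self]
  have := wt_merge μ I w y
  have hc : (wtp μ (mergeF I w y) : ℂ) * ((∏ i : {i // i ∈ I}, μ (y i.val) : ℝ) : ℂ)
      = (wtp μ y : ℂ) * ((∏ i : {i // i ∈ I}, μ (w i) : ℝ) : ℂ) := by
    rw [← Complex.ofReal_mul, ← Complex.ofReal_mul, this]
  rw [hc]

lemma sum_pi_wt {α : Type*} [Fintype α] [DecidableEq α] (hsum : ∑ a, μ a = 1) :
    ∑ w : α → Ω, ∏ a, μ (w a) = 1 := by
  rw [← Fintype.prod_sum (fun (_ : α) (b : Ω) => μ b)]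
  simp [hsum]

lemma sum_wtp (hsum : ∑ a, μ a = 1) : ∑ y : Fin n → Ω, wtp μ y = 1 := by
  simp only [wtp]; exact sum_pi_wt (α := Fin n) μ hsum

lemma wtp_pos (hμ : ∀ a, 0 < μ a) (y : Fin n → Ω) : 0 < wtp μ y :=
  Finset.prod_pos fun i _ => hμ (y i)

lemma wtp_nonneg (hμ : ∀ a, 0 < μ a) (y : Fin n → Ω) : 0 ≤ wtp μ y :=
  (wtp_pos μ hμ y).le

lemma sum_w_wt (hsum : ∑ a, μ a = 1) (I : Finset (Fin n)) :
    ∑ w : {i // i ∈ I} → Ω, ∏ i, μ (w i) = 1 :=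
  sum_pi_wt (α := {i // i ∈ I}) μ hsum

/-- if `f` is an `S`-junta and `S` is disjoint from `I`, averaging over `I` does nothing. -/
lemma avg_of_junta (hsum : ∑ a, μ a = 1) {I S : Finset (Fin n)} {f : (Fin n → Ω) → ℂ}
    (hf : IsJunta f S) (hdisj : ∀ i ∈ S, i ∉ I) : avg μ I f = f := by
  funext y
  unfold avg
  have : ∀ w : {i // i ∈ I} → Ω, f (mergeF I w y) = f y := by
    intro w
    exact hf _ _ fun i hi => mergeF_not_mem (hdisj i hi)
  simp only [this, ← Finset.sum_mul]
  rw [← Complex.ofReal_sum, sum_w_wt μ hsum I, Complex.ofReal_one, one_mul]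

/-- `avg μ I f` is a junta on `S \ I` when `f` is a junta on `S`. -/
lemma avg_junta {I S : Finset (Fin n)} {f : (Fin n → Ω) → ℂ}
    (hf : IsJunta f S) : IsJunta (avg μ I f) (S \ I) := by
  intro x y hxy
  unfold avg
  refine Finset.sum_congr rfl fun w _ => ?_
  congr 1
  refine hf _ _ fun i hi => ?_
  by_cases h : i ∈ I
  · rw [mergeF_mem h, mergeF_mem h]
  · rw [mergeF_not_mem h, mergeF_not_mem h]
    exact hxy i (Finset.mem_sdiff.mpr ⟨hi, h⟩)

/-- any `avg μ I f` is a junta on `Iᶜ`. -/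
lemma avg_junta_compl (I : Finset (Fin n)) (f : (Fin n → Ω) → ℂ) :
    IsJunta (avg μ I f) Iᶜ := by
  intro x y hxy
  unfold avg
  refine Finset.sum_congr rfl fun w _ => ?_
  have hm : mergeF I w x = mergeF I w y := by
    funext i
    by_cases h : i ∈ I
    · rw [mergeF_mem h, mergeF_mem h]
    · rw [mergeF_not_mem h, mergeF_not_mem h]
      exact hxy i (Finset.mem_compl.mpr h)
  rw [hm]

lemma avg_idem (hsum : ∑ a, μ a = 1) (I : Finset (Fin n)) (f : (Fin n → Ω) → ℂ) :
    avg μ I (avg μ I f) = avg μ I f := by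
  funext y
  have hj : ∀ w : {i // i ∈ I} → Ω, avg μ I f (mergeF I w y) = avg μ I f y := by
    intro w
    refine avg_junta_compl μ I f _ _ fun i hi => ?_
    exact mergeF_not_mem (Finset.mem_compl.mp hi)
  show ∑ w : {i // i ∈ I} → Ω, ((∏ i, μ (w i) : ℝ) : ℂ) * avg μ I f (mergeF I w y) = _
  simp only [hj, ← Finset.sum_mul]
  rw [← Complex.ofReal_sum, sum_w_wt μ hsum I, Complex.ofReal_one, one_mul]

lemma inner_self (f : (Fin n → Ω) → ℂ) : innerμ μ f f = ((norm2sq μ f : ℝ) : ℂ) := by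
  unfold innerμ norm2sq
  rw [Complex.ofReal_sum]
  refine Finset.sum_congr rfl fun x _ => ?_
  rw [mul_assoc, Complex.mul_conj]
  push_cast
  ring

lemma norm2sq_nonneg (hμ : ∀ a, 0 < μ a) (f : (Fin n → Ω) → ℂ) : 0 ≤ norm2sq μ f :=
  Finset.sum_nonneg fun x _ => mul_nonneg (wtp_nonneg μ hμ x) (Complex.normSq_nonneg _)

lemma eq_zero_of_norm2sq (hμ : ∀ a, 0 < μ a) {f : (Fin n → Ω) → ℂ}
    (h : norm2sq μ f = 0) : f = 0 := by
  funext x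
  have hterm : ∀ y ∈ (Finset.univ : Finset (Fin n → Ω)), 0 ≤ wtp μ y * Complex.normSq (f y) :=
    fun y _ => mul_nonneg (wtp_nonneg μ hμ y) (Complex.normSq_nonneg _)
  have := (Finset.sum_eq_zero_iff_of_nonneg hterm).mp h x (Finset.mem_univ x)
  have h2 : Complex.normSq (f x) = 0 := by
    rcases mul_eq_zero.mp this with h' | h'
    · exact absurd h' (wtp_pos μ hμ x).ne'
    · exact h'
  simpa using Complex.normSq_eq_zero.mp h2

lemma inner_conj (f h : (Fin n → Ω) → ℂ) :
    innerμ μ f h = starRingEnd ℂ (innerμ μ h f) := by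
  unfold innerμ
  rw [map_sum]
  refine Finset.sum_congr rfl fun x _ => ?_
  rw [map_mul, map_mul, Complex.conj_ofReal, Complex.conj_conj]
  ring

/-- Key orthogonality: `g ∈ V_{=S}` is orthogonal to any `T`-junta when `S ⊄ T`. -/
lemma inner_eq_zero_of_junta (hμ : ∀ a, 0 < μ a) (hsum : ∑ a, μ a = 1)
    {g f : (Fin n → Ω) → ℂ} {S T : Finset (Fin n)}
    (hgS : InVeq μ g S) (hfT : IsJunta f T) (hST : ¬ S ⊆ T) :
    innerμ μ g f = 0 := by
  set J : Finset (Fin n) := Tᶜ with hJ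
  have hgJ : IsJunta (avg μ J g) (S \ J) := avg_junta μ hgS.1
  have hSJ : S \ J ⊂ S := by
    obtain ⟨i, hiS, hiT⟩ := Finset.not_subset.mp hST
    refine Finset.ssubset_iff_of_subset (Finset.sdiff_subset) |>.mpr ?_
    exact ⟨i, hiS, fun hmem => (Finset.mem_sdiff.mp hmem).2 (Finset.mem_compl.mpr hiT)⟩
  have h0 : innerμ μ g (avg μ J g) = 0 := hgS.2 _ hSJ _ hgJ
  have h1 : innerμ μ (avg μ J g) (avg μ J g) = 0 := by
    rw [avg_selfadj, avg_idem μ hsum, h0]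
  have h2 : norm2sq μ (avg μ J g) = 0 := by
    have := (inner_self μ (avg μ J g)).symm.trans h1
    exact_mod_cast this
  have h3 : avg μ J g = 0 := eq_zero_of_norm2sq μ hμ h2
  have h4 : avg μ J f = f := by
    refine avg_of_junta μ hsum hfT fun i hi hiJ => ?_
    exact (Finset.mem_compl.mp hiJ) hi
  calc innerμ μ g f = innerμ μ g (avg μ J f) := by rw [h4]
    _ = innerμ μ (avg μ J g) f := (avg_selfadj μ J g f).symm
    _ = 0 := by
      rw [h3]
      unfold innerμ
      simp

/-- Cross terms vanish. -/
lemma cross_zero (hμ : ∀ a, 0 < μ a) (hsum : ∑ a, μ a = 1)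
    {F : Finset (Fin n) → ((Fin n → Ω) → ℂ)} (hF : ∀ S, InVeq μ (F S) S)
    (I : Finset (Fin n)) {S S' : Finset (Fin n)} (hne : S ≠ S') :
    innerμ μ (avg μ I (F S)) (avg μ I (F S')) = 0 := by
  by_cases hc : S ⊆ S' \ I
  · -- then ¬ S' ⊆ S \ I ; kill via conjugate side
    have hc2 : ¬ S' ⊆ S \ I := by
      intro h'
      exact hne (Finset.Subset.antisymm (hc.trans Finset.sdiff_subset)
        (h'.trans Finset.sdiff_subset))
    have : innerμ μ (F S') (avg μ I (F S)) = 0 :=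
      inner_eq_zero_of_junta μ hμ hsum (hF S') (avg_junta μ (hF S).1) hc2
    rw [inner_conj, avg_selfadj, avg_idem μ hsum, ← inner_conj]
    rw [inner_conj, this, map_zero]
  · have : innerμ μ (F S) (avg μ I (F S')) = 0 :=
      inner_eq_zero_of_junta μ hμ hsum (hF S) (avg_junta μ (hF S').1) hc
    rw [avg_selfadj, avg_idem μ hsum, this]

lemma inner_sum_left {α : Type*} (A : Finset α) (u : α → (Fin n → Ω) → ℂ)
    (h : (Fin n → Ω) → ℂ) :
    innerμ μ (∑ S ∈ A, u S) h = ∑ S ∈ A, innerμ μ (u S) h := by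
  unfold innerμ
  rw [Finset.sum_comm]
  refine Finset.sum_congr rfl fun x _ => ?_
  simp only [Finset.sum_apply, Finset.mul_sum, Finset.sum_mul]

lemma inner_sum_right {α : Type*} (A : Finset α) (u : α → (Fin n → Ω) → ℂ)
    (f : (Fin n → Ω) → ℂ) :
    innerμ μ f (∑ S ∈ A, u S) = ∑ S ∈ A, innerμ μ f (u S) := by
  unfold innerμ
  rw [Finset.sum_comm]
  refine Finset.sum_congr rfl fun x _ => ?_
  simp only [Finset.sum_apply, map_sum, Finset.mul_sum]

lemma norm2sq_avg_decomp (hμ : ∀ a, 0 < μ a) (hsum : ∑ a, μ a = 1)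
    {F : Finset (Fin n) → ((Fin n → Ω) → ℂ)} (hF : ∀ S, InVeq μ (F S) S)
    {g : (Fin n → Ω) → ℂ} (hdec : g = ∑ S, F S) (I : Finset (Fin n)) :
    norm2sq μ (avg μ I g) = ∑ S, norm2sq μ (avg μ I (F S)) := by
  have hlin : avg μ I g = ∑ S, avg μ I (F S) := by
    funext y
    rw [hdec]
    unfold avg
    simp only [Finset.sum_apply, Finset.mul_sum]
    rw [Finset.sum_comm]
  have key : innerμ μ (avg μ I g) (avg μ I g)
      = ∑ S, innerμ μ (avg μ I (F S)) (avg μ I (F S)) := by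
    rw [hlin, inner_sum_left]
    refine Finset.sum_congr rfl fun S _ => ?_
    rw [inner_sum_right]
    refine Finset.sum_eq_single S (fun S' _ hne => ?_) (by simp)
    exact cross_zero μ hμ hsum hF I (fun h => hne h.symm)
  have : ((norm2sq μ (avg μ I g) : ℝ) : ℂ)
      = ((∑ S, norm2sq μ (avg μ I (F S)) : ℝ) : ℂ) := by
    rw [inner_self μ (avg μ I g)] at key
    rw [key, Complex.ofReal_sum]
    exact Finset.sum_congr rfl fun S _ => inner_self μ _
  exact_mod_cast this

lemma per_I_bound (hμ : ∀ a, 0 < μ a) (hsum : ∑ a, μ a = 1)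
    {F : Finset (Fin n) → ((Fin n → Ω) → ℂ)} (hF : ∀ S, InVeq μ (F S) S)
    {g : (Fin n → Ω) → ℂ} (hdec : g = ∑ S, F S) (d : ℕ) (I : Finset (Fin n)) :
    ∑ S ∈ Finset.univ.filter (fun S : Finset (Fin n) => S.card ≤ d ∧ ∀ i ∈ S, i ∉ I),
        norm2sq μ (F S) ≤ norm2sq μ (avg μ I g) := by
  rw [norm2sq_avg_decomp μ hμ hsum hF hdec I]
  have heq : ∀ S ∈ Finset.univ.filter
      (fun S : Finset (Fin n) => S.card ≤ d ∧ ∀ i ∈ S, i ∉ I),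
      norm2sq μ (F S) = norm2sq μ (avg μ I (F S)) := by
    intro S hS
    rw [avg_of_junta μ hsum (hF S).1 (Finset.mem_filter.mp hS).2.2]
  rw [Finset.sum_congr rfl heq]
  exact Finset.sum_le_sum_of_subset_of_nonneg (Finset.filter_subset _ _)
    fun S _ _ => norm2sq_nonneg μ hμ _

lemma sum_rho (q : ℝ) :
    ∑ I : Finset (Fin n), q ^ I.card * (1 - q) ^ (n - I.card) = 1 := by
  have h := Fintype.prod_add (fun _ : Fin n => q) (fun _ : Fin n => 1 - q)
  simp only [Finset.prod_const] at h
  have h2 : ∀ I : Finset (Fin n), Iᶜ.card = n - I.card := by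
    intro I
    rw [Finset.card_compl, Fintype.card_fin]
  simp only [h2] at h
  simpa using h.symm

lemma sum_rho_disj (q : ℝ) (S : Finset (Fin n)) :
    ∑ I ∈ Finset.univ.filter (fun I : Finset (Fin n) => ∀ i ∈ S, i ∉ I),
      q ^ I.card * (1 - q) ^ (n - I.card) = (1 - q) ^ S.card := by
  have hfil : Finset.univ.filter (fun I : Finset (Fin n) => ∀ i ∈ S, i ∉ I)
      = Sᶜ.powerset := by
    ext I
    simp only [Finset.mem_filter, Finset.mem_univ, true_and, Finset.mem_powerset]
    constructor
    · intro h i hi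
      exact Finset.mem_compl.mpr fun hiS => h i hiS hi
    · intro h i hiS hiI
      exact Finset.mem_compl.mp (h hiI) hiS
  rw [hfil]
  have h := Finset.prod_add (fun _ : Fin n => q) (fun _ : Fin n => 1 - q) Sᶜ
  simp only [Finset.prod_const] at h
  have h1 : (q + (1 - q)) ^ Sᶜ.card = 1 := by norm_num
  rw [h1] at h
  have hcompl : Sᶜ.card = n - S.card := by
    rw [Finset.card_compl, Fintype.card_fin]
  calc ∑ I ∈ Sᶜ.powerset, q ^ I.card * (1 - q) ^ (n - I.card)
      = ∑ I ∈ Sᶜ.powerset, (q ^ I.card * (1 - q) ^ ((Sᶜ \ I).card)) * (1 - q) ^ S.card := by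
        refine Finset.sum_congr rfl fun I hI => ?_
        have hsub : I ⊆ Sᶜ := Finset.mem_powerset.mp hI
        rw [Finset.card_sdiff_of_subset hsub, hcompl, mul_assoc, ← pow_add]
        congr 2
        have h1 : I.card ≤ n - S.card := hcompl ▸ Finset.card_le_card hsub
        have h2 : S.card ≤ n := Finset.card_le_univ S |>.trans (by simp)
        omega
    _ = (∑ I ∈ Sᶜ.powerset, q ^ I.card * (1 - q) ^ ((Sᶜ \ I).card)) * (1 - q) ^ S.card := by
        rw [Finset.sum_mul]
    _ = (1 - q) ^ S.card := by rw [← h, one_mul]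

lemma abs_avg_le_one (hμ : ∀ a, 0 < μ a) (hsum : ∑ a, μ a = 1)
    {g : (Fin n → Ω) → ℂ} (hg : ∀ x, ‖g x‖ ≤ 1)
    (I : Finset (Fin n)) (y : Fin n → Ω) :
    ‖avg μ I g y‖ ≤ 1 := by
  unfold avg
  calc ‖∑ w : {i // i ∈ I} → Ω, ((∏ i, μ (w i) : ℝ) : ℂ) * g (mergeF I w y)‖
      ≤ ∑ w : {i // i ∈ I} → Ω,
          ‖((∏ i, μ (w i) : ℝ) : ℂ) * g (mergeF I w y)‖ := by
        exact norm_sum_le _ _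
    _ ≤ ∑ w : {i // i ∈ I} → Ω, ∏ i, μ (w i) := by
        refine Finset.sum_le_sum fun w _ => ?_
        rw [norm_mul, Complex.norm_real, Real.norm_eq_abs]
        have hp : (0:ℝ) ≤ ∏ i, μ (w i) := Finset.prod_nonneg fun i _ => (hμ (w i)).le
        rw [abs_of_nonneg hp]
        calc (∏ i, μ (w i)) * ‖g (mergeF I w y)‖
            ≤ (∏ i, μ (w i)) * 1 := by
              exact mul_le_mul_of_nonneg_left (hg _) hp
          _ = ∏ i, μ (w i) := mul_one _
    _ = 1 := sum_w_wt μ hsum I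

end Aux

/-- **Significant low-level weight gives bias after a random restriction.** If `g : Ω^n → ℂ` is
1-bounded with `W_{≤d}[g] ≥ ξ`, then a random restriction `(I,y)` with alive-probability
`1/(2d)` satisfies `|E[g_{Ī→y}]| ≥ √(ξ/(2e))` with probability at least `ξ/(2e)`. The
probability is written out as a sum over `I` and `y` of the corresponding weights. -/
theorem restriction_to_correlation (Ω : Type) [Fintype Ω] [Nonempty Ω] (μ : Ω → ℝ)
    (hμ : ∀ a, 0 < μ a) (hsum : ∑ a, μ a = 1)
    (n d : ℕ) (hd : 1 ≤ d) (ξ : ℝ) (hξ : 0 < ξ)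
    (g : (Fin n → Ω) → ℂ) (hg : ∀ x, ‖g x‖ ≤ 1)
    (F : Finset (Fin n) → ((Fin n → Ω) → ℂ))
    (hF : ∀ S, InVeq μ (F S) S) (hdec : g = ∑ S, F S)
    (hW : ξ ≤ ∑ S ∈ Finset.univ.filter (fun S : Finset (Fin n) => S.card ≤ d),
      norm2sq μ (F S)) :
    ξ / (2 * Real.exp 1) ≤
      ∑ I : Finset (Fin n), ∑ y : Fin n → Ω,
        (1 / (2 * (d : ℝ))) ^ I.card * (1 - 1 / (2 * (d : ℝ))) ^ (n - I.card) * wtp μ y *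
          (if Real.sqrt (ξ / (2 * Real.exp 1)) ≤
              ‖∑ w : {i // i ∈ I} → Ω,
                ((∏ i, μ (w i) : ℝ) : ℂ) * g (mergeF I w y)‖
           then 1 else 0) := by
  classical
  set q : ℝ := 1 / (2 * (d : ℝ)) with hq
  set θ : ℝ := ξ / (2 * Real.exp 1) with hθ
  have hd1 : (1:ℝ) ≤ (d:ℝ) := by exact_mod_cast hd
  have hq_pos : 0 < q := by rw [hq]; positivity
  have hq_le : q ≤ 1/2 := by
    rw [hq]
    rw [div_le_div_iff₀ (by linarith) (by norm_num)]
    linarith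
  have h1q_nonneg : (0:ℝ) ≤ 1 - q := by linarith
  have he2 : (2:ℝ) ≤ Real.exp 1 := by
    have := Real.exp_one_gt_d9; linarith
  have hθ_pos : 0 < θ := by
    rw [hθ]; positivity
  have hbern : (1:ℝ)/2 ≤ (1-q)^d := by
    have h := one_add_mul_le_pow (a := -q) (by linarith : (-2:ℝ) ≤ -q) d
    have hdq : (d:ℝ) * q = 1/2 := by
      rw [hq]
      have : (d:ℝ) ≠ 0 := by linarith
      field_simp
    have : (1:ℝ) + (d:ℝ) * (-q) = 1/2 := by rw [mul_neg]; linarith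
    calc (1:ℝ)/2 = 1 + (d:ℝ) * (-q) := this.symm
      _ ≤ (1 + -q)^d := h
      _ = (1-q)^d := by ring_nf
  have hρ_nonneg : ∀ I : Finset (Fin n), 0 ≤ q ^ I.card * (1-q) ^ (n - I.card) :=
    fun I => mul_nonneg (pow_nonneg hq_pos.le _) (pow_nonneg h1q_nonneg _)
  have havg : ∀ (I : Finset (Fin n)) (y : Fin n → Ω),
      (∑ w : {i // i ∈ I} → Ω, ((∏ i, μ (w i) : ℝ) : ℂ) * g (mergeF I w y))
        = Aux.avg μ I g y := fun I y => rfl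
  simp only [havg]
  -- Step 1
  have step1 : ξ/2 ≤ ∑ I : Finset (Fin n),
      (q ^ I.card * (1-q) ^ (n - I.card)) * norm2sq μ (Aux.avg μ I g) := by
    have hswap : ∑ I : Finset (Fin n), (q ^ I.card * (1-q) ^ (n - I.card)) *
        (∑ S ∈ Finset.univ.filter
            (fun S : Finset (Fin n) => S.card ≤ d ∧ ∀ i ∈ S, i ∉ I),
          norm2sq μ (F S))
        = ∑ S ∈ Finset.univ.filter (fun S : Finset (Fin n) => S.card ≤ d),
            (1-q) ^ S.card * norm2sq μ (F S) := by
      have hin : ∀ I : Finset (Fin n),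
          (∑ S ∈ Finset.univ.filter
              (fun S : Finset (Fin n) => S.card ≤ d ∧ ∀ i ∈ S, i ∉ I),
            norm2sq μ (F S))
          = ∑ S ∈ Finset.univ.filter (fun S : Finset (Fin n) => S.card ≤ d),
              (if ∀ i ∈ S, i ∉ I then norm2sq μ (F S) else 0) := by
        intro I
        rw [← Finset.sum_filter, Finset.filter_filter]
      simp only [hin, Finset.mul_sum]
      rw [Finset.sum_comm]
      refine Finset.sum_congr rfl fun S hS => ?_
      simp only [mul_ite, mul_zero]
      rw [← Finset.sum_filter, ← Finset.sum_mul, Aux.sum_rho_disj q S]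
    calc ξ/2
        ≤ ∑ S ∈ Finset.univ.filter (fun S : Finset (Fin n) => S.card ≤ d),
            (1-q) ^ S.card * norm2sq μ (F S) := by
          have hterm : ∀ S ∈ Finset.univ.filter
              (fun S : Finset (Fin n) => S.card ≤ d),
              (1/2) * norm2sq μ (F S) ≤ (1-q) ^ S.card * norm2sq μ (F S) := by
            intro S hS
            have hcard : S.card ≤ d := (Finset.mem_filter.mp hS).2
            have hpow : (1:ℝ)/2 ≤ (1-q) ^ S.card := by
              refine hbern.trans ?_
              exact pow_le_pow_of_le_one h1q_nonneg (by linarith) hcard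
            exact mul_le_mul_of_nonneg_right hpow (Aux.norm2sq_nonneg μ hμ _)
          calc ξ/2 = (1/2) * ξ := by ring
            _ ≤ (1/2) * ∑ S ∈ Finset.univ.filter
                  (fun S : Finset (Fin n) => S.card ≤ d), norm2sq μ (F S) := by
                exact mul_le_mul_of_nonneg_left hW (by norm_num)
            _ = ∑ S ∈ Finset.univ.filter
                  (fun S : Finset (Fin n) => S.card ≤ d),
                  (1/2) * norm2sq μ (F S) := Finset.mul_sum _ _ _
            _ ≤ _ := Finset.sum_le_sum hterm
      _ = ∑ I : Finset (Fin n), (q ^ I.card * (1-q) ^ (n - I.card)) *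
            (∑ S ∈ Finset.univ.filter
                (fun S : Finset (Fin n) => S.card ≤ d ∧ ∀ i ∈ S, i ∉ I),
              norm2sq μ (F S)) := hswap.symm
      _ ≤ _ := by
          refine Finset.sum_le_sum fun I _ => ?_
          exact mul_le_mul_of_nonneg_left
            (Aux.per_I_bound μ hμ hsum hF hdec d I) (hρ_nonneg I)
  -- Step 2 : pointwise Markov
  have hmark : ∀ (I : Finset (Fin n)) (y : Fin n → Ω),
      Complex.normSq (Aux.avg μ I g y) ≤
        θ + (if Real.sqrt θ ≤ ‖Aux.avg μ I g y‖ then (1:ℝ) else 0) := by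
    intro I y
    by_cases hc : Real.sqrt θ ≤ ‖Aux.avg μ I g y‖
    · rw [if_pos hc]
      have h1 := Aux.abs_avg_le_one μ hμ hsum hg I y
      have h0 := norm_nonneg (Aux.avg μ I g y)
      have h2 : Complex.normSq (Aux.avg μ I g y) ≤ 1 := by
        rw [← Complex.sq_norm]; nlinarith
      linarith
    · rw [if_neg hc]
      push_neg at hc
      have h0 := norm_nonneg (Aux.avg μ I g y)
      have h2 : (‖Aux.avg μ I g y‖)^2 < (Real.sqrt θ)^2 := by
        exact pow_lt_pow_left₀ hc h0 (by norm_num)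
      rw [Real.sq_sqrt hθ_pos.le] at h2
      rw [← Complex.sq_norm]
      linarith
  have step2 : ∑ I : Finset (Fin n),
      (q ^ I.card * (1-q) ^ (n - I.card)) * norm2sq μ (Aux.avg μ I g)
      ≤ θ + ∑ I : Finset (Fin n), ∑ y : Fin n → Ω,
          q ^ I.card * (1-q) ^ (n - I.card) * wtp μ y *
            (if Real.sqrt θ ≤ ‖Aux.avg μ I g y‖ then (1:ℝ) else 0) := by
    have hIy : ∀ I : Finset (Fin n),
        norm2sq μ (Aux.avg μ I g) ≤ θ + ∑ y : Fin n → Ω, wtp μ y *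
          (if Real.sqrt θ ≤ ‖Aux.avg μ I g y‖ then (1:ℝ) else 0) := by
      intro I
      have : norm2sq μ (Aux.avg μ I g)
          ≤ ∑ y : Fin n → Ω, wtp μ y *
              (θ + (if Real.sqrt θ ≤ ‖Aux.avg μ I g y‖ then (1:ℝ) else 0)) := by
        unfold norm2sq
        refine Finset.sum_le_sum fun y _ => ?_
        exact mul_le_mul_of_nonneg_left (hmark I y) (Aux.wtp_nonneg μ hμ y)
      refine this.trans ?_
      have hexp : ∑ y : Fin n → Ω, wtp μ y *
          (θ + (if Real.sqrt θ ≤ ‖Aux.avg μ I g y‖ then (1:ℝ) else 0))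
          = (∑ y : Fin n → Ω, wtp μ y) * θ + ∑ y : Fin n → Ω, wtp μ y *
              (if Real.sqrt θ ≤ ‖Aux.avg μ I g y‖ then (1:ℝ) else 0) := by
        rw [Finset.sum_mul, ← Finset.sum_add_distrib]
        refine Finset.sum_congr rfl fun y _ => ?_
        ring
      rw [hexp, Aux.sum_wtp μ hsum, one_mul]
    calc ∑ I : Finset (Fin n),
          (q ^ I.card * (1-q) ^ (n - I.card)) * norm2sq μ (Aux.avg μ I g)
        ≤ ∑ I : Finset (Fin n), (q ^ I.card * (1-q) ^ (n - I.card)) *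
            (θ + ∑ y : Fin n → Ω, wtp μ y *
              (if Real.sqrt θ ≤ ‖Aux.avg μ I g y‖ then (1:ℝ) else 0)) := by
          exact Finset.sum_le_sum fun I _ =>
            mul_le_mul_of_nonneg_left (hIy I) (hρ_nonneg I)
      _ = (∑ I : Finset (Fin n), q ^ I.card * (1-q) ^ (n - I.card)) * θ
          + ∑ I : Finset (Fin n), ∑ y : Fin n → Ω,
              q ^ I.card * (1-q) ^ (n - I.card) * wtp μ y *
                (if Real.sqrt θ ≤ ‖Aux.avg μ I g y‖ then (1:ℝ) else 0) := by
          rw [Finset.sum_mul, ← Finset.sum_add_distrib]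
          refine Finset.sum_congr rfl fun I _ => ?_
          rw [mul_add, Finset.mul_sum]
          congr 1
          refine Finset.sum_congr rfl fun y _ => ?_
          ring
      _ = θ + _ := by rw [Aux.sum_rho q, one_mul]
  -- combine
  set G : ℝ := ∑ I : Finset (Fin n), ∑ y : Fin n → Ω,
      q ^ I.card * (1-q) ^ (n - I.card) * wtp μ y *
        (if Real.sqrt θ ≤ ‖Aux.avg μ I g y‖ then (1:ℝ) else 0) with hG
  have hcomb : ξ/2 ≤ θ + G := step1.trans step2
  have hθe : θ * (2 * Real.exp 1) = ξ := by
    rw [hθ]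
    have : (2 * Real.exp 1) ≠ 0 := by positivity
    field_simp
  show θ ≤ G
  nlinarith [mul_nonneg hθ_pos.le (by linarith : (0:ℝ) ≤ Real.exp 1 - 2)]

end
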